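/- Let T be a tournament, σ an ordering of T, c a positive integer, and I a c-flat σ-interval. Then there exists a function ξ from the set of σ-backward arcs of T having at least one endpoint in I to {1,…,3c} such that for every γ with 1 ≤ γ ≤ |V(T)|−1 and every two distinct arcs a₁, a₂ ∈ cut_σ[γ] each having at least one endpoint in I, we have ξ(a₁) ≠ ξ(a₂). -/

import Mathlib

namespace TournamentPaper

open Classical

/-- A finite simple directed graph. -/
structure Digr (V : Type) where
  Adj : V → V → Prop
  loopless : ∀ v, ¬ Adj v v

namespace Digr

variable {V : Type}

/-- A tournament: exactly one of the two arcs between any two distinct vertices. -/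
def IsTournament (T : Digr V) : Prop :=
  ∀ u v : V, u ≠ v → (T.Adj u v ↔ ¬ T.Adj v u)

/-- The arc set, as a set of ordered pairs. -/
def arcs (T : Digr V) : Set (V × V) := {e | T.Adj e.1 e.2}

/-- The subdigraph induced by a set of vertices. -/
def induce (T : Digr V) (X : Set V) : Digr V where
  Adj u v := u ∈ X ∧ v ∈ X ∧ T.Adj u v
  loopless v h := T.loopless v h.2.2

/-- Deletion of a set of arcs. -/
def deleteArcs (T : Digr V) (F : Set (V × V)) : Digr V where
  Adj u v := T.Adj u v ∧ (u, v) ∉ F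
  loopless v h := T.loopless v h.1

/-- Outdegree of a vertex. -/
noncomputable def outdeg (T : Digr V) (u : V) : ℕ := {v | T.Adj u v}.ncard

end Digr

variable {V : Type}

/-- An ordering of the vertex set: a bijection onto `{1, …, |V|}`. -/
def IsOrdering [Fintype V] (σ : V → ℕ) : Prop :=
  Set.BijOn σ Set.univ (Set.Icc 1 (Fintype.card V))

/-- The `γ`-cut of an ordering: arcs `(u,v)` with `σ u > γ ≥ σ v`. -/
def cutAt (T : Digr V) (σ : V → ℕ) (γ : ℕ) : Set (V × V) :=
  {e | T.Adj e.1 e.2 ∧ γ < σ e.1 ∧ σ e.2 ≤ γ}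

/-- The width of an ordering: the maximal size of a cut. -/
noncomputable def width [Fintype V] (T : Digr V) (σ : V → ℕ) : ℕ :=
  (Finset.range (Fintype.card V + 1)).sup fun γ => (cutAt T σ γ).ncard

/-- The cutwidth: the minimum width over all orderings. -/
noncomputable def ctw [Fintype V] (T : Digr V) : ℕ :=
  sInf {w | ∃ σ : V → ℕ, IsOrdering σ ∧ width T σ = w}

/-- The σ-interval `σ(a, b]`. -/
def interval (σ : V → ℕ) (a b : ℕ) : Set V := {v | a < σ v ∧ σ v ≤ b}

/-- Arcs of `T` from `X` to `Y`. -/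
def arcsBetween (T : Digr V) (X Y : Set V) : Set (V × V) :=
  {e | T.Adj e.1 e.2 ∧ e.1 ∈ X ∧ e.2 ∈ Y}

/-- `∂⁺(I)` for `I = σ(a,b]`: arcs from `I` to `σ(0,a]`. -/
def dPlus [Fintype V] (T : Digr V) (σ : V → ℕ) (a b : ℕ) : Set (V × V) :=
  arcsBetween T (interval σ a b) (interval σ 0 a)

/-- `∂⁻(I)`: arcs from `σ(b,|V|]` to `I`. -/
def dMinus [Fintype V] (T : Digr V) (σ : V → ℕ) (a b : ℕ) : Set (V × V) :=
  arcsBetween T (interval σ b (Fintype.card V)) (interval σ a b)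

/-- `Γ⁺(I)`: arcs from `I` to `σ(b,|V|]`. -/
def gPlus [Fintype V] (T : Digr V) (σ : V → ℕ) (a b : ℕ) : Set (V × V) :=
  arcsBetween T (interval σ a b) (interval σ b (Fintype.card V))

/-- `Γ⁻(I)`: arcs from `σ(0,a]` to `I`. -/
def gMinus [Fintype V] (T : Digr V) (σ : V → ℕ) (a b : ℕ) : Set (V × V) :=
  arcsBetween T (interval σ 0 a) (interval σ a b)

/-- The interval `σ(a,b]` is `c`-flat: `|∂⁺| ≤ c`, `|∂⁻| ≤ c`, and the restriction
of `σ` to the induced subtournament has width at most `c`. -/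
def Flat [Fintype V] (T : Digr V) (σ : V → ℕ) (a b c : ℕ) : Prop :=
  (dPlus T σ a b).ncard ≤ c ∧ (dMinus T σ a b).ncard ≤ c ∧
  ∀ γ : ℕ, (cutAt (T.induce (interval σ a b)) σ γ).ncard ≤ c

/-- The list of arcs of a list of vertices (viewed as a walk). -/
def listArcs (l : List V) : List (V × V) := l.zip l.tail

/-- An immersion model of `H` in `G`: an injective vertex map together with, for each
arc of `H`, a directed simple path in `G` between the images of its endpoints, the
paths being pairwise arc-disjoint. -/
structure ImmersionModel {VH V : Type} (H : Digr VH) (G : Digr V) where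
  vmap : VH → V
  inj : Function.Injective vmap
  path : ∀ e : VH × VH, H.Adj e.1 e.2 → List V
  chain : ∀ e he, (path e he).Chain' G.Adj
  nodup : ∀ e he, (path e he).Nodup
  head : ∀ e he, (path e he).head? = some (vmap e.1)
  last : ∀ e he, (path e he).getLast? = some (vmap e.2)
  arc_disj : ∀ e he e' he', e ≠ e' → ∀ x ∈ listArcs (path e he), x ∉ listArcs (path e' he')

/-- The set of arcs of `G` used by an immersion model. -/
def ImmersionModel.arcsUsed {VH V : Type} {H : Digr VH} {G : Digr V}
    (M : ImmersionModel H G) : Set (V × V) :=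
  {x | ∃ e he, x ∈ listArcs (M.path e he)}

/-- `G` contains `H` as an immersion. -/
def HasImm {VH V : Type} (H : Digr VH) (G : Digr V) : Prop :=
  Nonempty (ImmersionModel H G)

/-- A family of pairwise arc-disjoint immersion models. -/
def ArcDisjointModels {VH V : Type} {H : Digr VH} {G : Digr V} {k : ℕ}
    (M : Fin k → ImmersionModel H G) : Prop :=
  ∀ i j, i ≠ j → Disjoint (M i).arcsUsed (M j).arcsUsed




lemma key_le_snd {M x1 x2 y1 y2 : ℕ} (hy : y1 < M) (h : x2 * M + x1 ≤ y2 * M + y1) :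
    x2 ≤ y2 := by
  by_contra hlt
  push_neg at hlt
  have h2 : (y2 + 1) * M ≤ x2 * M := Nat.mul_le_mul_right _ hlt
  rw [add_one_mul] at h2
  linarith

lemma key_inj {M x1 x2 y1 y2 : ℕ} (hx : x1 < M) (hy : y1 < M)
    (h : x2 * M + x1 = y2 * M + y1) : x1 = y1 ∧ x2 = y2 := by
  have h1 : x2 ≤ y2 := key_le_snd hy h.le
  have h2 : y2 ≤ x2 := key_le_snd hx h.ge
  have h3 : x2 = y2 := le_antisymm h1 h2
  subst h3
  exact ⟨Nat.add_left_cancel h, rfl⟩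

lemma exists_nat_injOn {α : Type} (S : Set α) (hfin : S.Finite) :
    ∃ f : α → ℕ, Set.InjOn f S ∧ ∀ x ∈ S, 1 ≤ f x ∧ f x ≤ S.ncard := by
  classical
  refine ⟨fun x => if h : x ∈ hfin.toFinset then (hfin.toFinset.equivFin ⟨x, h⟩).val + 1 else 0,
    ?_, ?_⟩
  · intro x hx y hy hxy
    have hx' : x ∈ hfin.toFinset := hfin.mem_toFinset.2 hx
    have hy' : y ∈ hfin.toFinset := hfin.mem_toFinset.2 hy
    simp only [dif_pos hx', dif_pos hy'] at hxy
    have : hfin.toFinset.equivFin ⟨x, hx'⟩ = hfin.toFinset.equivFin ⟨y, hy'⟩ := by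
      ext; omega
    have := hfin.toFinset.equivFin.injective this
    exact congrArg Subtype.val this
  · intro x hx
    have hx' : x ∈ hfin.toFinset := hfin.mem_toFinset.2 hx
    simp only [dif_pos hx']
    have hlt : (hfin.toFinset.equivFin ⟨x, hx'⟩).val < hfin.toFinset.card :=
      (hfin.toFinset.equivFin ⟨x, hx'⟩).isLt
    have hcard : S.ncard = hfin.toFinset.card := Set.ncard_eq_toFinset_card _ hfin
    omega



def akey {V : Type} (σ : V → ℕ) (M : ℕ) (e : V × V) : ℕ := σ e.2 * M + σ e.1

noncomputable def greedyCol {V : Type} (σ : V → ℕ) (M c : ℕ) (P : Set (V × V)) (e : V × V) : ℕ :=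
  sInf (Set.Icc (2*c+1) (3*c) \
    {n | ∃ e' : V × V, ∃ _h : akey σ M e' < akey σ M e,
      e' ∈ P ∧ σ e'.2 ≤ σ e.2 ∧ σ e.2 < σ e'.1 ∧ greedyCol σ M c P e' = n})
termination_by akey σ M e
decreasing_by exact _h

def Sset {V : Type} (σ : V → ℕ) (M : ℕ) (P : Set (V × V)) (e : V × V) : Set (V × V) :=
  {e' | akey σ M e' < akey σ M e ∧ e' ∈ P ∧ σ e'.2 ≤ σ e.2 ∧ σ e.2 < σ e'.1}

lemma used_eq {V : Type} (σ : V → ℕ) (M c : ℕ) (P : Set (V × V)) (e : V × V) :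
    {n | ∃ e' : V × V, ∃ _h : akey σ M e' < akey σ M e,
      e' ∈ P ∧ σ e'.2 ≤ σ e.2 ∧ σ e.2 < σ e'.1 ∧ greedyCol σ M c P e' = n}
    = greedyCol σ M c P '' Sset σ M P e := by
  ext n
  constructor
  · rintro ⟨e', h, h1, h2, h3, h4⟩
    exact ⟨e', ⟨h, h1, h2, h3⟩, h4⟩
  · rintro ⟨e', ⟨h, h1, h2, h3⟩, h4⟩
    exact ⟨e', h, h1, h2, h3, h4⟩

lemma greedyCol_mem {V : Type} [Finite V] {σ : V → ℕ} {M c : ℕ} {P : Set (V × V)} {e : V × V}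
    (h : (Sset σ M P e).ncard < c) :
    greedyCol σ M c P e ∈
      Set.Icc (2*c+1) (3*c) \ (greedyCol σ M c P '' Sset σ M P e) := by
  have hfin : (Sset σ M P e).Finite := Set.toFinite _
  have hU : (greedyCol σ M c P '' Sset σ M P e).ncard ≤ (Sset σ M P e).ncard :=
    Set.ncard_image_le hfin
  have hIcc : (Set.Icc (2*c+1) (3*c)).ncard = c := by
    rw [← Finset.coe_Icc, Set.ncard_coe_finset, Nat.card_Icc]
    omega
  have hD : (Set.Icc (2*c+1) (3*c) \ (greedyCol σ M c P '' Sset σ M P e)).Nonempty := by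
    rw [Set.nonempty_iff_ne_empty]
    intro hemp
    have hsub : Set.Icc (2*c+1) (3*c) ⊆ greedyCol σ M c P '' Sset σ M P e :=
      Set.diff_eq_empty.mp hemp
    have := Set.ncard_le_ncard hsub (hfin.image _)
    omega
  have heq : greedyCol σ M c P e =
      sInf (Set.Icc (2*c+1) (3*c) \ (greedyCol σ M c P '' Sset σ M P e)) := by
    rw [greedyCol, used_eq]
  rw [heq]
  exact Nat.sInf_mem hD


/-- a greedy coloring of the σ-backward arcs incident with a `c`-flat
σ-interval `I = σ(a,b]` with `3c` colors, so that arcs sharing a cut get different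
colors. -/
theorem exists_coloring_of_backward_arcs
    {V : Type} [Fintype V] (T : Digr V) (hT : T.IsTournament)
    (σ : V → ℕ) (hσ : IsOrdering σ) (c : ℕ) (hc : 0 < c)
    (a b : ℕ) (hab : a ≤ b) (hb : b ≤ Fintype.card V)
    (hflat : Flat T σ a b c) :
    ∃ ξ : V × V → ℕ,
      (∀ e : V × V, T.Adj e.1 e.2 → σ e.2 < σ e.1 →
        (e.1 ∈ interval σ a b ∨ e.2 ∈ interval σ a b) →
        1 ≤ ξ e ∧ ξ e ≤ 3 * c) ∧
      (∀ γ : ℕ, 1 ≤ γ → γ + 1 ≤ Fintype.card V →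
        ∀ e₁ ∈ cutAt T σ γ, ∀ e₂ ∈ cutAt T σ γ,
          (e₁.1 ∈ interval σ a b ∨ e₁.2 ∈ interval σ a b) →
          (e₂.1 ∈ interval σ a b ∨ e₂.2 ∈ interval σ a b) →
          e₁ ≠ e₂ → ξ e₁ ≠ ξ e₂) := by
  classical
  have hσmem : ∀ v : V, 1 ≤ σ v ∧ σ v ≤ Fintype.card V := fun v => hσ.mapsTo (Set.mem_univ v)
  have hσinj : Function.Injective σ :=
    Set.injOn_univ.mp hσ.injOn
  set M := Fintype.card V + 1 with hMdef
  set I := interval σ a b with hIdef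
  set P : Set (V × V) := {e | e.1 ∈ I ∧ e.2 ∈ I ∧ T.Adj e.1 e.2 ∧ σ e.2 < σ e.1} with hPdef
  obtain ⟨fp, fpinj, fpbd⟩ := exists_nat_injOn (dPlus T σ a b) (Set.toFinite _)
  obtain ⟨fm, fminj, fmbd⟩ := exists_nat_injOn (dMinus T σ a b) (Set.toFinite _)
  have fpbd' : ∀ e ∈ dPlus T σ a b, 1 ≤ fp e ∧ fp e ≤ c := fun e he =>
    ⟨(fpbd e he).1, le_trans (fpbd e he).2 hflat.1⟩
  have fmbd' : ∀ e ∈ dMinus T σ a b, 1 ≤ fm e ∧ fm e ≤ c := fun e he =>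
    ⟨(fmbd e he).1, le_trans (fmbd e he).2 hflat.2.1⟩
  have hScut : ∀ e ∈ P, (Sset σ M P e).ncard < c := by
    intro e heP
    have hecut : e ∈ cutAt (T.induce I) σ (σ e.2) :=
      ⟨⟨heP.1, heP.2.1, heP.2.2.1⟩, heP.2.2.2, le_refl _⟩
    have hsub : Sset σ M P e ⊆ cutAt (T.induce I) σ (σ e.2) \ {e} := by
      rintro e' ⟨hk, he'P, h1, h2⟩
      refine ⟨⟨⟨he'P.1, he'P.2.1, he'P.2.2.1⟩, h2, h1⟩, ?_⟩
      intro hEq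
      rw [Set.mem_singleton_iff] at hEq
      subst hEq
      exact absurd hk (lt_irrefl _)
    have h1 : (Sset σ M P e).ncard ≤ (cutAt (T.induce I) σ (σ e.2) \ {e}).ncard :=
      Set.ncard_le_ncard hsub (Set.toFinite _)
    have h2 : (cutAt (T.induce I) σ (σ e.2) \ {e}).ncard
        = (cutAt (T.induce I) σ (σ e.2)).ncard - 1 :=
      Set.ncard_diff_singleton_of_mem hecut
    have h3 := hflat.2.2 (σ e.2)
    rw [← hIdef] at h3
    have h4 : 0 < (cutAt (T.induce I) σ (σ e.2)).ncard :=
      (Set.ncard_pos (Set.toFinite _)).mpr ⟨e, hecut⟩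
    omega
  set ξ : V × V → ℕ := fun e =>
    if e ∈ dPlus T σ a b then fp e
    else if e ∈ dMinus T σ a b then c + fm e
    else greedyCol σ M c P e with hξdef
  have hclass : ∀ e : V × V, T.Adj e.1 e.2 → σ e.2 < σ e.1 → (e.1 ∈ I ∨ e.2 ∈ I) →
      e ∈ dPlus T σ a b ∨ e ∈ dMinus T σ a b ∨ e ∈ P := by
    intro e hadj hback hend
    have h1 := hσmem e.1
    have h2 := hσmem e.2
    rcases hend with h | h
    · have hI1 : a < σ e.1 ∧ σ e.1 ≤ b := h
      by_cases h' : a < σ e.2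
      · exact Or.inr (Or.inr ⟨h, ⟨h', by omega⟩, hadj, hback⟩)
      · exact Or.inl ⟨hadj, h, by omega, by omega⟩
    · have hI2 : a < σ e.2 ∧ σ e.2 ≤ b := h
      by_cases h' : σ e.1 ≤ b
      · exact Or.inr (Or.inr ⟨⟨by omega, h'⟩, h, hadj, hback⟩)
      · exact Or.inr (Or.inl ⟨hadj, ⟨by omega, by omega⟩, h⟩)
  have hPnotdP : ∀ e ∈ P, e ∉ dPlus T σ a b := by
    intro e he h
    have h1 : σ e.2 ≤ a := h.2.2.2
    have h2 : a < σ e.2 := he.2.1.1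
    omega
  have hPnotdM : ∀ e ∈ P, e ∉ dMinus T σ a b := by
    intro e he h
    have h1 : b < σ e.1 := h.2.1.1
    have h2 : σ e.1 ≤ b := he.1.2
    omega
  have hdMnotdP : ∀ e ∈ dMinus T σ a b, e ∉ dPlus T σ a b := by
    intro e he h
    have h1 : σ e.1 ≤ b := h.2.1.2
    have h2 : b < σ e.1 := he.2.1.1
    omega
  have hξP : ∀ e ∈ P, ξ e = greedyCol σ M c P e := by
    intro e he
    simp only [hξdef, if_neg (hPnotdP e he), if_neg (hPnotdM e he)]
  have hξdM : ∀ e ∈ dMinus T σ a b, ξ e = c + fm e := by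
    intro e he
    simp only [hξdef, if_neg (hdMnotdP e he), if_pos he]
  have hξdP : ∀ e ∈ dPlus T σ a b, ξ e = fp e := by
    intro e he
    simp only [hξdef, if_pos he]
  have hgP : ∀ e ∈ P, 2 * c + 1 ≤ greedyCol σ M c P e ∧ greedyCol σ M c P e ≤ 3 * c := by
    intro e he
    have := (greedyCol_mem (hScut e he)).1
    exact Set.mem_Icc.mp this
  refine ⟨ξ, ?_, ?_⟩
  · intro e hadj hback hend
    rcases hclass e hadj hback hend with h | h | h
    · rw [hξdP e h]
      have := fpbd' e h
      omega
    · rw [hξdM e h]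
      have := fmbd' e h
      omega
    · rw [hξP e h]
      have := hgP e h
      omega
  · intro γ hγ1 hγ2 e₁ he₁ e₂ he₂ hend₁ hend₂ hne
    have hb₁ : σ e₁.2 < σ e₁.1 := lt_of_le_of_lt he₁.2.2 he₁.2.1
    have hb₂ : σ e₂.2 < σ e₂.1 := lt_of_le_of_lt he₂.2.2 he₂.2.1
    have main : ∀ f g : V × V, f ∈ P → g ∈ P → f ∈ cutAt T σ γ → g ∈ cutAt T σ γ →
        akey σ M f < akey σ M g → greedyCol σ M c P f ≠ greedyCol σ M c P g := by
      intro f g hf hg hfc hgc hk'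
      have hfS : f ∈ Sset σ M P g := by
        refine ⟨hk', hf, ?_, ?_⟩
        · have hM : σ g.1 < M := by have := hσmem g.1; omega
          exact key_le_snd hM hk'.le
        · have h1 : σ g.2 ≤ γ := hgc.2.2
          have h2 : γ < σ f.1 := hfc.2.1
          omega
      have hmem := greedyCol_mem (hScut g hg)
      intro heq
      exact hmem.2 ⟨f, hfS, heq⟩
    rcases hclass e₁ he₁.1 hb₁ hend₁ with h1 | h1 | h1 <;>
      rcases hclass e₂ he₂.1 hb₂ hend₂ with h2 | h2 | h2
    · rw [hξdP e₁ h1, hξdP e₂ h2]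
      intro heq
      exact hne (fpinj h1 h2 heq)
    · rw [hξdP e₁ h1, hξdM e₂ h2]
      have := fpbd' e₁ h1
      have := fmbd' e₂ h2
      omega
    · rw [hξdP e₁ h1, hξP e₂ h2]
      have := fpbd' e₁ h1
      have := hgP e₂ h2
      omega
    · rw [hξdM e₁ h1, hξdP e₂ h2]
      have := fmbd' e₁ h1
      have := fpbd' e₂ h2
      omega
    · rw [hξdM e₁ h1, hξdM e₂ h2]
      intro heq
      exact hne (fminj h1 h2 (by omega))
    · rw [hξdM e₁ h1, hξP e₂ h2]
      have := fmbd' e₁ h1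
      have := hgP e₂ h2
      omega
    · rw [hξP e₁ h1, hξdP e₂ h2]
      have := hgP e₁ h1
      have := fpbd' e₂ h2
      omega
    · rw [hξP e₁ h1, hξdM e₂ h2]
      have := hgP e₁ h1
      have := fmbd' e₂ h2
      omega
    · rw [hξP e₁ h1, hξP e₂ h2]
      have hk : akey σ M e₁ ≠ akey σ M e₂ := by
        intro h
        have hx : σ e₁.1 < M := by have := hσmem e₁.1; omega
        have hy : σ e₂.1 < M := by have := hσmem e₂.1; omega
        obtain ⟨ha, hb⟩ := key_inj hx hy h
        exact hne (Prod.ext (hσinj ha) (hσinj hb))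
      rcases lt_or_gt_of_ne hk with h | h
      · exact main e₁ e₂ h1 h2 he₁ he₂ h
      · exact (main e₂ e₁ h2 h1 he₂ he₁ h).symm


end TournamentPaper
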